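/- Let (X, d) be a compact metric space, f ∈ ℓ^∞(X) arbitrary, and g: X → ℝ continuous. Then the Hadamard directional derivative of the supremum functional σ at f in direction g equals sup_{A_0(f)} g, where A_0(f) = {x ∈ X : ∃ x_n → x with f(x_n) → sup_X f}. In particular, for every t_n ↓ 0 and h_n → g in sup norm, (sup_X(f + t_n h_n) − sup_X f)/t_n → sup_{A_0(f)} g. -/

import Mathlib

open Filter Topology

/-- On a compact metric space, for bounded `f` and continuous `g`, the Hadamard directional
derivative of the supremum functional at `f` in direction `g` is `sup_{A_0(f)} g`. -/
theorem stmt_6 {X : Type*} [MetricSpace X] [CompactSpace X] [Nonempty X]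
    (f : X → ℝ) (hf : ∃ C, ∀ x, |f x| ≤ C)
    (g : X → ℝ) (hgc : Continuous g)
    (t : ℕ → ℝ) (hs : ℕ → X → ℝ)
    (ht_anti : Antitone t) (ht_pos : ∀ n, 0 < t n) (ht : Tendsto t atTop (𝓝 0))
    (hhs_bdd : ∀ n, ∃ C, ∀ x, |hs n x| ≤ C)
    (hhs : TendstoUniformly hs g atTop) :
    Tendsto (fun n => ((⨆ x, (f x + t n * hs n x)) - ⨆ x, f x) / t n) atTop
      (𝓝 (sSup (g '' {x : X | ∃ u : ℕ → X,
          Tendsto u atTop (𝓝 x) ∧ Tendsto (fun k => f (u k)) atTop (𝓝 (⨆ y, f y))}))) := by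
  obtain ⟨Cf, hCf⟩ := hf
  set σf := ⨆ y, f y with hσdef
  have hBf : BddAbove (Set.range f) := ⟨Cf, by rintro _ ⟨x, rfl⟩; exact (abs_le.mp (hCf x)).2⟩
  have hfle : ∀ x, f x ≤ σf := fun x => le_ciSup hBf x
  obtain ⟨x₀, -, hx₀⟩ := isCompact_univ.exists_isMaxOn Set.univ_nonempty
    ((continuous_abs.comp hgc).continuousOn)
  set Cg := |g x₀| with hCgdef
  have hCg : ∀ x, |g x| ≤ Cg := fun x => hx₀ (Set.mem_univ x)
  have hCg0 : (0:ℝ) ≤ Cg := abs_nonneg _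
  set A := {x : X | ∃ u : ℕ → X, Tendsto u atTop (𝓝 x) ∧
      Tendsto (fun k => f (u k)) atTop (𝓝 σf)} with hAdef
  -- subsequence extraction for near-maximizing sequences
  have extract : ∀ v : ℕ → X, (∀ n : ℕ, σf - 1/(n+1) ≤ f (v n)) →
      ∃ y ∈ A, ∃ φ : ℕ → ℕ, StrictMono φ ∧ Tendsto (v ∘ φ) atTop (𝓝 y) := by
    intro v hv
    obtain ⟨y, -, φ, hφ, hvy⟩ := isCompact_univ.tendsto_subseq
      (x := v) (fun n => Set.mem_univ (v n))
    have h1 : Tendsto (fun n : ℕ => σf - 1/(n+1 : ℝ)) atTop (𝓝 σf) := by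
      simpa using tendsto_const_nhds.sub (tendsto_one_div_add_atTop_nhds_zero_nat : Tendsto (fun n : ℕ => 1 / ((n : ℝ) + 1)) atTop (𝓝 0))
    have h2 : Tendsto (fun n => f (v (φ n))) atTop (𝓝 σf) := by
      refine tendsto_of_tendsto_of_tendsto_of_le_of_le (h1.comp hφ.tendsto_atTop)
        tendsto_const_nhds (fun n => hv (φ n)) (fun n => hfle _)
    exact ⟨y, ⟨v ∘ φ, hvy, h2⟩, φ, hφ, hvy⟩
  have hAne : A.Nonempty := by
    have hv : ∀ n : ℕ, ∃ x, σf - 1/(n+1) < f x := by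
      intro n
      apply exists_lt_of_lt_ciSup
      have h1 : (0:ℝ) < 1/(n+1) := by positivity
      linarith
    choose v hv using hv
    obtain ⟨y, hy, -⟩ := extract v (fun n => (hv n).le)
    exact ⟨y, hy⟩
  set S := sSup (g '' A) with hSdef
  have hSbdd : BddAbove (g '' A) := ⟨Cg, by rintro _ ⟨x, -, rfl⟩; exact (abs_le.mp (hCg x)).2⟩
  have hgleS : ∀ y ∈ A, g y ≤ S := fun y hy => le_csSup hSbdd ⟨y, hy, rfl⟩
  -- key compactness lemma
  have key : ∀ ε > (0:ℝ), ∃ δ > (0:ℝ), ∀ x, σf - δ ≤ f x → g x ≤ S + ε := by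
    intro ε hε
    by_contra hcon
    push_neg at hcon
    have hv : ∀ n : ℕ, ∃ x, σf - 1/(n+1) ≤ f x ∧ S + ε < g x := by
      intro n
      obtain ⟨x, hx1, hx2⟩ := hcon (1/(n+1)) (by positivity)
      exact ⟨x, hx1, hx2⟩
    choose v hv1 hv2 using hv
    obtain ⟨y, hy, φ, hφ, hvy⟩ := extract v hv1
    have hle : S + ε ≤ g y :=
      le_of_tendsto_of_tendsto tendsto_const_nhds ((hgc.tendsto y).comp hvy)
        (Eventually.of_forall fun n => (hv2 (φ n)).le)
    linarith [hgleS y hy]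
  -- boundedness of perturbed functions
  have hBfh : ∀ n, BddAbove (Set.range (fun x => f x + t n * hs n x)) := by
    intro n
    obtain ⟨Ch, hCh⟩ := hhs_bdd n
    refine ⟨Cf + t n * Ch, ?_⟩
    rintro _ ⟨x, rfl⟩
    have h1 := (abs_le.mp (hCf x)).2
    have h2 := mul_le_mul_of_nonneg_left (abs_le.mp (hCh x)).2 (ht_pos n).le
    dsimp only
    linarith
  -- uniform convergence in abs form
  have hhs' : ∀ ε > (0:ℝ), ∀ᶠ n in atTop, ∀ x, |hs n x - g x| < ε := by
    intro ε hε
    filter_upwards [Metric.tendstoUniformly_iff.mp hhs ε hε] with n hn x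
    have h := hn x
    rw [Real.dist_eq] at h
    calc |hs n x - g x| = |g x - hs n x| := abs_sub_comm _ _
      _ < ε := h
  -- upper bound
  have upper : ∀ ε > (0:ℝ), ∀ᶠ n in atTop,
      ((⨆ x, (f x + t n * hs n x)) - σf) / t n ≤ S + ε := by
    intro ε hε
    obtain ⟨δ, hδ, hkey⟩ := key (ε/2) (by linarith)
    have hM : (0:ℝ) < Cg + 1 + |S| + ε := by
      have := abs_nonneg S; linarith
    have ht' : ∀ᶠ n in atTop, t n * (Cg + 1 + |S| + ε) ≤ δ := by
      have h := ht.eventually (eventually_le_nhds (div_pos hδ hM))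
      filter_upwards [h] with n hn
      rw [← le_div_iff₀ hM]
      exact hn
    filter_upwards [ht', hhs' (min (ε/2) 1) (lt_min (by linarith) one_pos)] with n htn hhn
    have hsup : (⨆ x, (f x + t n * hs n x)) ≤ σf + t n * (S + ε) := by
      refine ciSup_le fun x => ?_
      have hx1 : hs n x ≤ g x + min (ε/2) 1 := by
        have := (abs_lt.mp (hhn x)).2; linarith
      by_cases hfx : σf - δ ≤ f x
      · have hg := hkey x hfx
        have h1 : hs n x ≤ S + ε := by
          have := min_le_left (ε/2) 1; linarith
        have h2 := mul_le_mul_of_nonneg_left h1 (ht_pos n).le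
        linarith [hfle x]
      · push_neg at hfx
        have h2 : hs n x ≤ Cg + 1 := by
          have ha := (abs_le.mp (hCg x)).2
          have hb := min_le_right (ε/2) 1
          linarith
        have h3 := mul_le_mul_of_nonneg_left h2 (ht_pos n).le
        have h4 := mul_le_mul_of_nonneg_left (neg_abs_le S) (ht_pos n).le
        have h5 : (0:ℝ) ≤ t n * ε := (mul_pos (ht_pos n) hε).le
        nlinarith
    rw [div_le_iff₀ (ht_pos n), mul_comm]
    linarith
  -- lower bound
  have lower : ∀ ε > (0:ℝ), ∀ᶠ n in atTop,
      S - ε ≤ ((⨆ x, (f x + t n * hs n x)) - σf) / t n := by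
    intro ε hε
    obtain ⟨z, hzmem, hz⟩ := exists_lt_of_lt_csSup (hAne.image g)
      (show S - ε/4 < S by linarith)
    obtain ⟨y, hyA, rfl⟩ := hzmem
    obtain ⟨u, hu, hfu⟩ := hyA
    have hgu : ∀ᶠ k in atTop, g y - ε/4 < g (u k) :=
      ((hgc.tendsto y).comp hu).eventually (eventually_gt_nhds (by linarith))
    filter_upwards [hhs' (ε/4) (by linarith)] with n hhn
    have htε : (0:ℝ) < t n * (ε/4) := mul_pos (ht_pos n) (by linarith)
    have hfu' : ∀ᶠ k in atTop, σf - t n * (ε/4) ≤ f (u k) :=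
      hfu.eventually (eventually_ge_nhds (by linarith))
    obtain ⟨k, hk1, hk2⟩ := (hfu'.and hgu).exists
    have hle : f (u k) + t n * hs n (u k) ≤ ⨆ x, (f x + t n * hs n x) :=
      le_ciSup (hBfh n) (u k)
    have hgk : g (u k) - ε/4 < hs n (u k) := by
      have := (abs_lt.mp (hhn (u k))).1; linarith
    rw [le_div_iff₀ (ht_pos n)]
    have p1 := mul_lt_mul_of_pos_left hgk (ht_pos n)
    have p2 := mul_lt_mul_of_pos_left hk2 (ht_pos n)
    have p3 := mul_lt_mul_of_pos_left hz (ht_pos n)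
    nlinarith [ht_pos n]
  rw [Metric.tendsto_nhds]
  intro ε hε
  filter_upwards [upper (ε/2) (by linarith), lower (ε/2) (by linarith)] with n h1 h2
  rw [Real.dist_eq, abs_sub_lt_iff]
  constructor <;> linarith
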